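/- In any loop L, the Moufang identity (m1): z(x(yx)) = ((zx)y)x for all x,y,z, is equivalent to the Moufang identity (m2): x(y(xz)) = ((xy)x)z for all x,y,z. -/
import Mathlib


/-- A loop: a quasigroup with a two-sided identity element. -/
class Loop (L : Type*) extends Mul L, One L where
  one_mul : ∀ a : L, 1 * a = a
  mul_one : ∀ a : L, a * 1 = a
  left_bij : ∀ a : L, Function.Bijective fun x : L => a * x
  right_bij : ∀ a : L, Function.Bijective fun x : L => x * a

theorem moufang_aux {L : Type*} [Loop L]
    (h : ∀ x y z : L, z * (x * (y * x)) = ((z * x) * y) * x) :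
    ∀ x y z : L, x * (y * (x * z)) = ((x * y) * x) * z := by
  classical
  have rinj : ∀ x : L, Function.Injective fun a : L => a * x := fun x => (Loop.right_bij x).1
  have linj : ∀ x : L, Function.Injective fun a : L => x * a := fun x => (Loop.left_bij x).1
  have rsurj : ∀ x : L, Function.Surjective fun a : L => a * x := fun x => (Loop.right_bij x).2
  set inv : L → L := fun x => Classical.choose (rsurj x 1) with hinvdef
  have inv_mul : ∀ x : L, inv x * x = 1 := fun x => Classical.choose_spec (rsurj x 1)
  -- flexibility
  have F : ∀ x y : L, x * (y * x) = (x * y) * x := by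
    intro x y
    have h1 := h x y 1
    rwa [Loop.one_mul, Loop.one_mul] at h1
  -- right inverse property
  have RIP : ∀ z x : L, (z * x) * inv x = z := by
    intro z x
    have h1 := h x (inv x) z
    rw [inv_mul, Loop.mul_one] at h1
    exact (rinj x h1).symm
  have mul_inv : ∀ x : L, x * inv x = 1 := by
    intro x
    have h1 := RIP 1 x
    rwa [Loop.one_mul] at h1
  have inv_inv : ∀ x : L, inv (inv x) = x := by
    intro x
    apply rinj (inv x)
    show inv (inv x) * inv x = x * inv x
    rw [inv_mul, mul_inv]
  have RIP' : ∀ z x : L, (z * inv x) * x = z := by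
    intro z x
    have h1 := RIP z (inv x)
    rwa [inv_inv] at h1
  -- right Bol form of m1
  have RB : ∀ x y z : L, z * ((x * y) * x) = ((z * x) * y) * x := by
    intro x y z
    rw [← F]
    exact h x y z
  -- left inverse property
  have LIP : ∀ x w : L, inv x * (x * w) = w := by
    intro x w
    obtain ⟨y, hy⟩ := rsurj x w
    have hy' : y * x = w := hy
    have h1 := RB x y (inv x)
    rw [inv_mul, Loop.one_mul, ← F, hy'] at h1
    exact h1
  have LIP' : ∀ x w : L, x * (inv x * w) = w := by
    intro x w
    have h1 := LIP (inv x) w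
    rwa [inv_inv] at h1
  -- antiautomorphic inverse property
  have AIP : ∀ x y : L, inv (x * y) = inv y * inv x := by
    intro x y
    have h1 := RB x y (inv y * inv x)
    rw [RIP', inv_mul, Loop.one_mul] at h1
    -- h1 : (inv y * inv x) * ((x * y) * x) = x
    have h2 : (inv y * inv x) * (inv (inv y * inv x) * x) = x := LIP' (inv y * inv x) x
    have h3 : (x * y) * x = inv (inv y * inv x) * x := linj (inv y * inv x) (h1.trans h2.symm)
    have h4 : x * y = inv (inv y * inv x) := rinj x h3
    rw [h4, inv_inv]
  intro a b c
  have h1 := RB (inv a) (inv b) (inv c)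
  have h2 := congrArg inv h1
  rw [AIP, AIP, AIP, AIP, AIP, AIP, inv_inv, inv_inv, inv_inv] at h2
  -- h2 : (a * (b * a)) * c = a * (b * (a * c))
  rw [F] at h2
  exact h2.symm

instance (L : Type*) [Loop L] : Loop (MulOpposite L) where
  one_mul a := MulOpposite.unop_injective (by
    simp only [MulOpposite.unop_mul, MulOpposite.unop_one]
    exact Loop.mul_one _)
  mul_one a := MulOpposite.unop_injective (by
    simp only [MulOpposite.unop_mul, MulOpposite.unop_one]
    exact Loop.one_mul _)
  left_bij a := by
    constructor
    · intro u v huv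
      apply MulOpposite.unop_injective
      have huv' : u.unop * a.unop = v.unop * a.unop := by
        have := congrArg MulOpposite.unop huv
        simpa using this
      exact (Loop.right_bij a.unop).1 huv'
    · intro b
      obtain ⟨c, hc⟩ := (Loop.right_bij a.unop).2 b.unop
      exact ⟨MulOpposite.op c, MulOpposite.unop_injective (by simpa using hc)⟩
  right_bij a := by
    constructor
    · intro u v huv
      apply MulOpposite.unop_injective
      have huv' : a.unop * u.unop = a.unop * v.unop := by
        have := congrArg MulOpposite.unop huv
        simpa using this
      exact (Loop.left_bij a.unop).1 huv'
    · intro b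
      obtain ⟨c, hc⟩ := (Loop.left_bij a.unop).2 b.unop
      exact ⟨MulOpposite.op c, MulOpposite.unop_injective (by simpa using hc)⟩

/-- In any loop, the Moufang identity (m1) is equivalent to the Moufang identity (m2). -/
theorem moufang_m1_iff_m2 (L : Type*) [Loop L] :
    (∀ x y z : L, z * (x * (y * x)) = ((z * x) * y) * x) ↔
    (∀ x y z : L, x * (y * (x * z)) = ((x * y) * x) * z) := by
  constructor
  · exact moufang_aux
  · intro h2
    have hop : ∀ X Y Z : MulOpposite L, Z * (X * (Y * X)) = ((Z * X) * Y) * X := by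
      intro X Y Z
      apply MulOpposite.unop_injective
      simp only [MulOpposite.unop_mul]
      exact (h2 X.unop Y.unop Z.unop).symm
    have h1op := moufang_aux hop
    intro x y z
    have := h1op (MulOpposite.op x) (MulOpposite.op y) (MulOpposite.op z)
    have h := congrArg MulOpposite.unop this
    simp only [MulOpposite.unop_mul, MulOpposite.unop_op] at h
    exact h.symm
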